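/- For arbitrary real sequences a = (a_1, a_2, ...) and e = (e_1, e_2, ...), let s^{a,e}(m,k) denote the (m,k) entry of the inverse of the lower-triangular matrix [S^{a,e}(m,k)]_{m,k=0}^n (for any n ≥ m, k; the entry does not depend on n). Then for all m ≥ k ≥ 0, (-1)^{m-k} s^{a,e}(m,k) = ∑_{S} ∏_{i=1}^{m-k} (a_{s_i} - e_{s_i - i + 1}), where the sum is over all subsets S = {s_1, ..., s_{m-k}} of {1, ..., m} with s_1 < s_2 < ... < s_{m-k}. -/

import Mathlib

open Polynomial Finset

/-- The numbers `S^{a,e}(m,k)` (0-indexed: `a i`, `e i` denote `a_{i+1}`, `e_{i+1}`),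
uniquely determined by `∏_{i=1}^m (x - e_i) = ∑_{k=0}^m S^{a,e}(m,k) ∏_{i=1}^k (x - a_i)`
together with `S^{a,e}(m,k) = 0` for `k > m`. -/
def SaeRel (a e : ℕ → ℝ) (S : ℕ → ℕ → ℝ) : Prop :=
  (∀ m k : ℕ, m < k → S m k = 0) ∧
  ∀ m : ℕ, ∏ i ∈ Finset.range m, (X - C (e i)) =
    ∑ k ∈ Finset.range (m + 1), C (S m k) * ∏ i ∈ Finset.range k, (X - C (a i))

/-- The cap-index function for restricted growth: `rgsF a e i` is the (0-indexed)
index of the cap for `e i`; the cap for `e 0` is `a 0`, and the cap index increments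
exactly when equality with the cap holds. -/
noncomputable def rgsF (a e : ℕ → ℝ) : ℕ → ℕ
  | 0 => 0
  | i + 1 => if e i = a (rgsF a e i) then rgsF a e i + 1 else rgsF a e i

/-- `e` is a restricted growth sequence relative to `a`. -/
def IsRGS (a e : ℕ → ℝ) : Prop := ∀ i : ℕ, e i ≤ a (rgsF a e i)

/-- An infinite matrix (rows and columns indexed by `ℕ`) is totally non-negative if
every minor is non-negative. -/
def TotallyNonneg (M : ℕ → ℕ → ℝ) : Prop :=
  ∀ (p : ℕ) (r c : Fin p → ℕ), StrictMono r → StrictMono c →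
    0 ≤ (Matrix.of fun i j => M (r i) (c j)).det

noncomputable def Td (a e : ℕ → ℝ) (m d : ℕ) : ℝ :=
  ∑ s : {s : Fin d → Fin m // ∀ i j, i < j → s i < s j},
    ∏ i : Fin d, (a (s.1 i : ℕ) - e ((s.1 i : ℕ) - (i : ℕ)))

lemma Td_zero (a e : ℕ → ℝ) (m : ℕ) : Td a e m 0 = 1 := by
  have : Nonempty {s : Fin 0 → Fin m // ∀ i j, i < j → s i < s j} :=
    ⟨⟨Fin.elim0, fun i => i.elim0⟩⟩
  have hsub : Subsingleton {s : Fin 0 → Fin m // ∀ i j, i < j → s i < s j} := by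
    constructor; intro x y; ext i; exact i.elim0
  have hcard : Fintype.card {s : Fin 0 → Fin m // ∀ i j, i < j → s i < s j} = 1 :=
    Fintype.card_eq_one_iff.mpr ⟨this.some, fun y => hsub.allEq y this.some⟩
  simp [Td, Finset.sum_const, hcard]

lemma Td_of_lt (a e : ℕ → ℝ) {m d : ℕ} (h : m < d) : Td a e m d = 0 := by
  have : IsEmpty {s : Fin d → Fin m // ∀ i j, i < j → s i < s j} := by
    constructor
    rintro ⟨s, hs⟩
    have hsm : StrictMono s := fun i j hij => hs i j hij
    have := Fintype.card_le_of_injective s hsm.injective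
    simp at this
    omega
  simp [Td]

section rec
variable (m d : ℕ)

def Phi :
    ({s : Fin (d+1) → Fin m // ∀ i j, i < j → s i < s j} ⊕
     {s : Fin d → Fin m // ∀ i j, i < j → s i < s j}) →
    {s : Fin (d+1) → Fin (m+1) // ∀ i j, i < j → s i < s j}
  | .inl ⟨s, hs⟩ => ⟨fun i => (s i).castSucc, fun i j h => by
      simpa using hs i j h⟩
  | .inr ⟨s, hs⟩ => ⟨Fin.snoc (fun i => (s i).castSucc) (Fin.last m), by
      intro i j h
      obtain ⟨i', rfl⟩ := Fin.exists_castSucc_eq.mpr (Fin.ne_last_of_lt h)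
      induction j using Fin.lastCases with
      | last =>
        simp only [Fin.snoc_castSucc, Fin.snoc_last]
        exact Fin.castSucc_lt_last _
      | cast j' =>
        simp only [Fin.snoc_castSucc]
        exact Fin.castSucc_lt_castSucc_iff.mpr (hs i' j' (by simpa using h))⟩

lemma Phi_bijective : Function.Bijective (Phi m d) := by
  constructor
  · rintro (⟨s, hs⟩ | ⟨s, hs⟩) (⟨t, ht⟩ | ⟨t, ht⟩) hxy <;>
      simp only [Phi, Subtype.mk.injEq] at hxy
    · have : s = t := by
        funext i
        exact Fin.castSucc_injective m (congrFun hxy i)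
      simp [this]
    · exfalso
      have := congrFun hxy (Fin.last d)
      simp only [Fin.snoc_last] at this
      exact absurd this (Fin.ne_of_lt (Fin.castSucc_lt_last _))
    · exfalso
      have := congrFun hxy (Fin.last d)
      simp only [Fin.snoc_last] at this
      exact absurd this.symm (Fin.ne_of_lt (Fin.castSucc_lt_last _))
    · have : s = t := by
        funext i
        have := congrFun hxy i.castSucc
        simp only [Fin.snoc_castSucc] at this
        exact Fin.castSucc_injective m this
      simp [this]
  · rintro ⟨u, hu⟩
    by_cases hlast : u (Fin.last d) = Fin.last m
    · have hlt : ∀ i : Fin d, (u i.castSucc : ℕ) < m := by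
        intro i
        have := hu i.castSucc (Fin.last d) (Fin.castSucc_lt_last _)
        rw [hlast] at this
        simpa [Fin.lt_def] using this
      refine ⟨.inr ⟨fun i => (u i.castSucc).castLT (hlt i), fun i j h => by
        have := hu i.castSucc j.castSucc (Fin.castSucc_lt_castSucc_iff.mpr h)
        simp only [Fin.lt_def, Fin.coe_castLT] at this ⊢
        exact this⟩, ?_⟩
      simp only [Phi, Subtype.mk.injEq]
      funext i
      induction i using Fin.lastCases with
      | last => simp [hlast]
      | cast i' => simp
    · have hlt : ∀ i : Fin (d+1), (u i : ℕ) < m := by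
        intro i
        have h1 : u i ≤ u (Fin.last d) := by
          rcases eq_or_lt_of_le (Fin.le_last i) with h | h
          · exact le_of_eq (by rw [h])
          · exact le_of_lt (hu i (Fin.last d) h)
        have h2 : u (Fin.last d) < Fin.last m := Fin.lt_last_iff_ne_last.mpr hlast
        have := lt_of_le_of_lt h1 h2
        simpa [Fin.lt_def] using this
      refine ⟨.inl ⟨fun i => (u i).castLT (hlt i), fun i j h => by
        have := hu i j h
        simp only [Fin.lt_def, Fin.coe_castLT] at this ⊢
        exact this⟩, ?_⟩
      simp only [Phi, Subtype.mk.injEq]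
      funext i
      simp

lemma Td_succ_succ (a e : ℕ → ℝ) :
    Td a e (m+1) (d+1) = Td a e m (d+1) + (a m - e (m - d)) * Td a e m d := by
  have key := Fintype.sum_bijective (Phi m d) (Phi_bijective m d)
    (fun x => ∏ i : Fin (d+1),
      (a ((Phi m d x).1 i : ℕ) - e (((Phi m d x).1 i : ℕ) - (i : ℕ))))
    (fun s => ∏ i : Fin (d+1), (a (s.1 i : ℕ) - e ((s.1 i : ℕ) - (i : ℕ))))
    (fun x => rfl)
  have step : ∀ s : {s : Fin d → Fin m // ∀ i j, i < j → s i < s j},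
      (∏ i : Fin (d+1), (a ((Phi m d (.inr s)).1 i : ℕ) -
        e (((Phi m d (.inr s)).1 i : ℕ) - (i : ℕ)))) =
      (∏ i : Fin d, (a (s.1 i : ℕ) - e ((s.1 i : ℕ) - (i : ℕ)))) * (a m - e (m - d)) := by
    rintro ⟨s, hs⟩
    rw [Fin.prod_univ_castSucc]
    congr 1
    · apply Finset.prod_congr rfl
      intro i _
      simp [Phi]
    · simp [Phi]
  have h2 : (∑ x : {s : Fin d → Fin m // ∀ i j, i < j → s i < s j},
      ∏ i : Fin (d+1), (a ((Phi m d (.inr x)).1 i : ℕ) -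
        e (((Phi m d (.inr x)).1 i : ℕ) - (i : ℕ)))) = (a m - e (m - d)) * Td a e m d := by
    rw [Finset.sum_congr rfl (fun s _ => step s), ← Finset.sum_mul]
    exact mul_comm _ _
  rw [Td, ← key, Fintype.sum_sum_type, h2]
  rfl
end rec

noncomputable def Nae (a e : ℕ → ℝ) (m k : ℕ) : ℝ :=
  if k ≤ m then (-1 : ℝ)^(m-k) * Td a e m (m - k) else 0

lemma Nae_diag (a e : ℕ → ℝ) (m : ℕ) : Nae a e m m = 1 := by
  simp [Nae, Td_zero]

lemma Nae_of_lt (a e : ℕ → ℝ) {m k : ℕ} (h : m < k) : Nae a e m k = 0 := by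
  simp [Nae, Nat.not_le.mpr h]

lemma Nae_zero (a e : ℕ → ℝ) (m : ℕ) :
    Nae a e (m+1) 0 = (e 0 - a m) * Nae a e m 0 := by
  simp only [Nae, Nat.zero_le, if_true, Nat.sub_zero]
  rw [Td_succ_succ m m a e, Td_of_lt a e (Nat.lt_succ_self m), Nat.sub_self]
  rw [pow_succ]
  ring

lemma Nae_rec (a e : ℕ → ℝ) (m k : ℕ) :
    Nae a e (m+1) (k+1) = Nae a e m k + (e (k+1) - a m) * Nae a e m (k+1) := by
  rcases Nat.lt_or_ge m (k+1) with h | h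
  · -- k ≥ m : cases k = m and k > m
    rcases Nat.lt_or_ge m k with h2 | h2
    · rw [Nae_of_lt a e h2, Nae_of_lt a e h,
        Nae_of_lt a e (Nat.succ_lt_succ h2)]
      ring
    · have hk : k = m := le_antisymm (by omega) (by omega)
      subst hk
      rw [Nae_diag, Nae_diag, Nae_of_lt a e (Nat.lt_succ_self k)]
      ring
  · -- k + 1 ≤ m, so k < m
    have hd : m - k = (m - (k+1)) + 1 := by omega
    have hd2 : m + 1 - (k + 1) = (m - (k+1)) + 1 := by omega
    set d := m - (k+1) with hdd
    have hmd : m - d = k + 1 := by omega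
    simp only [Nae, h, Nat.le_succ_of_le h, Nat.succ_le_succ h, if_true,
      Nat.le_of_succ_le h, hd, hd2]
    rw [Td_succ_succ m d a e, hmd]
    have : m - k = d + 1 := hd
    rw [Nat.succ_sub_succ m k] at *
    rw [pow_succ]
    ring

lemma Nae_poly (a e : ℕ → ℝ) : ∀ m : ℕ,
    ∏ i ∈ Finset.range m, (X - C (a i)) =
      ∑ k ∈ Finset.range (m+1), C (Nae a e m k) * ∏ i ∈ Finset.range k, (X - C (e i)) := by
  intro m
  induction m with
  | zero => simp [Nae_diag]
  | succ m ih =>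
    have lhs : ∏ i ∈ Finset.range (m+1), (X - C (a i)) =
        ∑ k ∈ Finset.range (m+1), (X - C (a m)) *
          (C (Nae a e m k) * ∏ i ∈ Finset.range k, (X - C (e i))) := by
      rw [Finset.prod_range_succ, ih, Finset.sum_mul]
      apply Finset.sum_congr rfl
      intro k _
      ring
    have termwise : ∀ k, (X - C (a m)) *
          (C (Nae a e m k) * ∏ i ∈ Finset.range k, (X - C (e i))) =
        C (Nae a e m k) * ∏ i ∈ Finset.range (k+1), (X - C (e i)) +
        C ((e k - a m) * Nae a e m k) * ∏ i ∈ Finset.range k, (X - C (e i)) := by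
      intro k
      rw [Finset.prod_range_succ, map_mul, map_sub]
      ring
    rw [lhs, Finset.sum_congr rfl (fun k _ => termwise k), Finset.sum_add_distrib]
    -- second sum: extend to range (m+2)
    have hsnd : ∑ k ∈ Finset.range (m+1),
        C ((e k - a m) * Nae a e m k) * ∏ i ∈ Finset.range k, (X - C (e i)) =
        ∑ k ∈ Finset.range (m+2),
        C ((e k - a m) * Nae a e m k) * ∏ i ∈ Finset.range k, (X - C (e i)) := by
      rw [Finset.sum_range_succ (n := m+1)]
      rw [Nae_of_lt a e (Nat.lt_succ_self m)]
      simp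
    rw [hsnd]
    -- target
    rw [Finset.sum_range_succ' (fun k => C (Nae a e (m+1) k) * ∏ i ∈ Finset.range k, (X - C (e i))) (m+1)]
    rw [Finset.sum_range_succ' (fun k => C ((e k - a m) * Nae a e m k) * ∏ i ∈ Finset.range k, (X - C (e i))) (m+1)]
    have hT : ∀ k, C (Nae a e (m+1) (k+1)) * ∏ i ∈ Finset.range (k+1), (X - C (e i)) =
        C (Nae a e m k) * ∏ i ∈ Finset.range (k+1), (X - C (e i)) +
        C ((e (k+1) - a m) * Nae a e m (k+1)) * ∏ i ∈ Finset.range (k+1), (X - C (e i)) := by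
      intro k
      rw [Nae_rec, map_add, add_mul]
    rw [Finset.sum_congr rfl (fun k _ => hT k), Finset.sum_add_distrib, Nae_zero, map_mul]
    ring

lemma indep (b : ℕ → ℝ) : ∀ (N : ℕ) (c : ℕ → ℝ),
    (∑ k ∈ Finset.range N, C (c k) * ∏ i ∈ Finset.range k, (X - C (b i))) = 0 →
    ∀ k < N, c k = 0 := by
  intro N
  induction N with
  | zero => simp
  | succ N ih =>
    intro c h
    have hmonic : ∀ k : ℕ, (∏ i ∈ Finset.range k, (X - C (b i))).Monic :=
      fun k => monic_prod_of_monic _ _ fun i _ => monic_X_sub_C _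
    have hdeg : ∀ k : ℕ, (∏ i ∈ Finset.range k, (X - C (b i))).natDegree = k := by
      intro k
      rw [natDegree_prod_of_monic _ _ fun i _ => monic_X_sub_C _]
      simp
    have hcN : c N = 0 := by
      have hc := congrArg (fun p => Polynomial.coeff p N) h
      simp only [Polynomial.finset_sum_coeff, Polynomial.coeff_C_mul,
        Polynomial.coeff_zero] at hc
      rw [Finset.sum_range_succ] at hc
      have hz : ∀ k ∈ Finset.range N,
          c k * (∏ i ∈ Finset.range k, (X - C (b i))).coeff N = 0 := by
        intro k hk
        rw [Polynomial.coeff_eq_zero_of_natDegree_lt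
          (by rw [hdeg]; exact Finset.mem_range.mp hk), mul_zero]
      rw [Finset.sum_eq_zero hz, zero_add] at hc
      have h1 : (∏ i ∈ Finset.range N, (X - C (b i))).coeff N = 1 := by
        have := (hmonic N).coeff_natDegree
        rwa [hdeg] at this
      rwa [h1, mul_one] at hc
    refine fun k hk => ?_
    rcases Nat.lt_succ_iff_lt_or_eq.mp hk with h1 | rfl
    · apply ih c _ k h1
      rw [Finset.sum_range_succ, hcN] at h
      simpa using h
    · exact hcN

lemma delta_sum (a e : ℕ → ℝ) (S : ℕ → ℕ → ℝ) (hS : SaeRel a e S) (n : ℕ) :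
    ∀ m ≤ n, ∀ k ≤ n, (∑ j ∈ Finset.range (n+1), S m j * Nae a e j k) =
      if m = k then 1 else 0 := by
  intro m hm
  have h1 : ∏ i ∈ Finset.range m, (X - C (e i)) =
      ∑ k ∈ Finset.range (n+1),
        C (∑ j ∈ Finset.range (n+1), S m j * Nae a e j k) *
          ∏ i ∈ Finset.range k, (X - C (e i)) := by
    have e1 : ∏ i ∈ Finset.range m, (X - C (e i)) =
        ∑ j ∈ Finset.range (n+1), C (S m j) * ∏ i ∈ Finset.range j, (X - C (a i)) := by
      rw [(hS.2 m)]
      apply Finset.sum_subset (Finset.range_subset_range.mpr (by omega))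
      intro j _ hj
      rw [hS.1 m j (by simp at hj ⊢; omega)]
      simp
    rw [e1]
    have e2 : ∀ j ∈ Finset.range (n+1),
        C (S m j) * ∏ i ∈ Finset.range j, (X - C (a i)) =
        ∑ k ∈ Finset.range (n+1), C (S m j * Nae a e j k) *
          ∏ i ∈ Finset.range k, (X - C (e i)) := by
      intro j hj
      rw [Nae_poly a e j, Finset.mul_sum]
      have : ∑ k ∈ Finset.range (j+1), C (S m j) *
          (C (Nae a e j k) * ∏ i ∈ Finset.range k, (X - C (e i))) =
          ∑ k ∈ Finset.range (n+1), C (S m j) *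
          (C (Nae a e j k) * ∏ i ∈ Finset.range k, (X - C (e i))) := by
        apply Finset.sum_subset (Finset.range_subset_range.mpr (by simp at hj; omega))
        intro k _ hk
        rw [Nae_of_lt a e (by simp at hk ⊢; omega)]
        simp
      rw [this]
      apply Finset.sum_congr rfl
      intro k _
      rw [map_mul]
      ring
    rw [Finset.sum_congr rfl e2, Finset.sum_comm]
    apply Finset.sum_congr rfl
    intro k _
    rw [← Finset.sum_mul, ← map_sum]
  have h2 : ∏ i ∈ Finset.range m, (X - C (e i)) =
      ∑ k ∈ Finset.range (n+1),
        C (if m = k then (1:ℝ) else 0) * ∏ i ∈ Finset.range k, (X - C (e i)) := by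
    rw [Finset.sum_congr rfl (fun k _ => by
      rw [apply_ite C, map_one, map_zero, ite_mul, one_mul, zero_mul])]
    rw [Finset.sum_ite_eq (Finset.range (n+1)) m
      (fun k => ∏ i ∈ Finset.range k, (X - C (e i)))]
    simp [Nat.lt_succ_of_le hm]
  intro k hk
  have h0 : ∑ k ∈ Finset.range (n+1),
      C ((∑ j ∈ Finset.range (n+1), S m j * Nae a e j k) - (if m = k then 1 else 0)) *
        ∏ i ∈ Finset.range k, (X - C (e i)) = 0 := by
    have := h1.symm.trans h2
    simp only [map_sub, sub_mul, Finset.sum_sub_distrib]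
    rw [← h1, ← h2, sub_self]
  have := indep e (n+1)
    (fun k => (∑ j ∈ Finset.range (n+1), S m j * Nae a e j k) - (if m = k then 1 else 0))
    h0 k (Nat.lt_succ_of_le hk)
  simpa using sub_eq_zero.mp this


/-- With `s^{a,e}(m,k)` the `(m,k)` entry of the inverse of the lower-triangular
matrix `[S^{a,e}(m,k)]_{m,k=0}^n` (any `n ≥ m`), one has
`(-1)^{m-k} s^{a,e}(m,k) = ∑_{1 ≤ s_1 < ⋯ < s_{m-k} ≤ m} ∏_{i=1}^{m-k} (a_{s_i} - e_{s_i-i+1})`,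
the strictly increasing sequences being encoded (0-indexed) as strictly monotone
functions `Fin (m-k) → Fin m`. -/
theorem stmt9 (a e : ℕ → ℝ) (S : ℕ → ℕ → ℝ) (hS : SaeRel a e S)
    (n m k : ℕ) (hkm : k ≤ m) (hmn : m ≤ n) :
    (-1 : ℝ) ^ (m - k) *
      (Matrix.of fun i j : Fin (n + 1) => S i j)⁻¹
        ⟨m, Nat.lt_succ_of_le hmn⟩ ⟨k, Nat.lt_succ_of_le (hkm.trans hmn)⟩ =
    ∑ s : {s : Fin (m - k) → Fin m // ∀ i j, i < j → s i < s j},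
      ∏ i : Fin (m - k), (a (s.1 i : ℕ) - e ((s.1 i : ℕ) - (i : ℕ))) := by
  have hMN : (Matrix.of fun i j : Fin (n + 1) => S i j) *
      (Matrix.of fun i j : Fin (n + 1) => Nae a e i j) = 1 := by
    ext i j
    rw [Matrix.mul_apply, Matrix.one_apply]
    have hd := delta_sum a e S hS n i (Nat.lt_succ_iff.mp i.isLt) j (Nat.lt_succ_iff.mp j.isLt)
    rw [← Fin.sum_univ_eq_sum_range (fun l => S i l * Nae a e l j) (n+1)] at hd
    simp only [Matrix.of_apply]
    rw [hd]
    simp [Fin.ext_iff]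
  have hinv : (Matrix.of fun i j : Fin (n + 1) => S i j)⁻¹ =
      (Matrix.of fun i j : Fin (n + 1) => Nae a e i j) :=
    Matrix.inv_eq_right_inv hMN
  rw [hinv]
  simp only [Matrix.of_apply]
  rw [Nae]
  rw [if_pos hkm, ← mul_assoc, ← mul_pow]
  norm_num
  rfl
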